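/- Let ℬ denote the set of all Banach limits, viewed as a subset of the dual space of ℓ∞, and let Ext(ℬ) be its set of extreme points. Then every sequence (Bₖ) of pairwise distinct points of Ext(ℬ) is 1-equivalent to the unit vector basis of ℓ₁: for every n and all real scalars a₁, …, aₙ, ‖Σₖ₌₁ⁿ aₖ Bₖ‖ = Σₖ₌₁ⁿ |aₖ|, where the norm is the dual norm on (ℓ∞)*. -/

import Mathlib

noncomputable section
open scoped ENNReal

/-- `ℓ∞`: the Banach space of bounded real sequences with the sup norm. -/
abbrev Linf : Type := lp (fun _ : ℕ => ℝ) ∞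

/-- The left shift `(x₁,x₂,x₃,…) ↦ (x₂,x₃,x₄,…)` on `ℓ∞`. -/
def shiftSeq (x : Linf) : Linf :=
  ⟨fun n => x (n + 1), memℓp_infty ⟨‖x‖, by
    rintro r ⟨n, rfl⟩
    exact lp.norm_apply_le_norm ENNReal.top_ne_zero x (n + 1)⟩⟩

/-- The constant sequence `e = (1,1,1,…)` in `ℓ∞`. -/
def onesSeq : Linf :=
  ⟨fun _ => 1, memℓp_infty ⟨1, by rintro r ⟨n, rfl⟩; simp⟩⟩

/-- A Banach limit: a positive, shift-invariant continuous linear functional `L` on `ℓ∞`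
with `L(1,1,1,…) = 1`. -/
def IsBanachLimit (L : StrongDual ℝ Linf) : Prop :=
  (∀ x : Linf, (∀ n, 0 ≤ x n) → 0 ≤ L x) ∧
  (∀ x : Linf, L (shiftSeq x) = L x) ∧
  L onesSeq = 1

-- infrastructure
def mkL (f : ℕ → ℝ) (C : ℝ) (h : ∀ n, |f n| ≤ C) : Linf :=
  ⟨f, memℓp_infty ⟨C, by rintro r ⟨n, rfl⟩; exact h n⟩⟩

@[simp] lemma mkL_apply (f : ℕ → ℝ) (C : ℝ) (h : ∀ n, |f n| ≤ C) (n : ℕ) :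
    (mkL f C h) n = f n := rfl

@[simp] lemma shiftSeq_apply (x : Linf) (n : ℕ) : shiftSeq x n = x (n + 1) := rfl
@[simp] lemma onesSeq_apply (n : ℕ) : onesSeq n = 1 := rfl

lemma Linf.norm_le {x : Linf} {C : ℝ} (hC : 0 ≤ C) (h : ∀ n, |x n| ≤ C) : ‖x‖ ≤ C :=
  lp.norm_le_of_forall_le hC h

lemma Linf.abs_apply_le (x : Linf) (n : ℕ) : |x n| ≤ ‖x‖ :=
  lp.norm_apply_le_norm ENNReal.top_ne_zero x n

lemma shift_sub (x y : Linf) : shiftSeq (x - y) = shiftSeq x - shiftSeq y := by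
  apply lp.ext; funext n
  simp [lp.coeFn_sub, Pi.sub_apply]

def posL (x : Linf) : Linf :=
  mkL (fun n => max (x n) 0) ‖x‖ (by
    intro n
    show |max (x n) 0| ≤ ‖x‖
    have h1 := Linf.abs_apply_le x n
    rcases le_total (x n) 0 with h | h
    · rw [max_eq_right h, abs_zero]; exact (abs_nonneg _).trans h1
    · rw [max_eq_left h, abs_of_nonneg h]
      exact (le_abs_self _).trans h1)

def negL (x : Linf) : Linf := posL (-x)

@[simp] lemma posL_apply (x : Linf) (n : ℕ) : posL x n = max (x n) 0 := rfl
@[simp] lemma negL_apply (x : Linf) (n : ℕ) : negL x n = max (-(x n)) 0 := by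
  simp [negL, posL, mkL, lp.coeFn_neg]

lemma posL_nonneg (x : Linf) (n : ℕ) : 0 ≤ posL x n := le_max_right _ _
lemma negL_nonneg (x : Linf) (n : ℕ) : 0 ≤ negL x n := by rw [negL_apply]; exact le_max_right _ _

lemma posL_sub_negL (x : Linf) : posL x - negL x = x := by
  apply lp.ext; funext n
  simp only [lp.coeFn_sub, Pi.sub_apply, posL_apply, negL_apply]
  rcases le_total (x n) 0 with h | h
  · rw [max_eq_right h, max_eq_left (by linarith)]; ring
  · rw [max_eq_left h, max_eq_right (by linarith)]; ring

variable {φ ψ : StrongDual ℝ Linf}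

/-- positivity predicate -/
def Pos (φ : StrongDual ℝ Linf) : Prop := ∀ x : Linf, (∀ n, 0 ≤ x n) → 0 ≤ φ x

lemma Pos.mono {φ : StrongDual ℝ Linf} (hφ : Pos φ) {x y : Linf}
    (h : ∀ n, x n ≤ y n) : φ x ≤ φ y := by
  have := hφ (y - x) (fun n => by
    have : (y - x) n = y n - x n := by rw [lp.coeFn_sub]; rfl
    rw [this]; linarith [h n])
  rw [map_sub] at this; linarith

def Wit (x : Linf) : Set Linf := {y : Linf | ∀ n, 0 ≤ y n ∧ y n ≤ x n}

def valSet (φ ψ : StrongDual ℝ Linf) (x : Linf) : Set ℝ :=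
  (fun y : Linf => φ y + ψ (x - y)) '' Wit x

def mval (φ ψ : StrongDual ℝ Linf) (x : Linf) : ℝ := sInf (valSet φ ψ x)

lemma sub_mem_nonneg {x y : Linf} (hy : y ∈ Wit x) : ∀ n, 0 ≤ (x - y) n := by
  intro n
  have : (x - y) n = x n - y n := by rw [lp.coeFn_sub]; rfl
  rw [this]; linarith [(hy n).2]

lemma zero_mem_Wit {x : Linf} (hx : ∀ n, 0 ≤ x n) : (0 : Linf) ∈ Wit x := by
  intro n
  have h0 : (0 : Linf) n = 0 := by rw [lp.coeFn_zero]; rfl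
  rw [h0]
  exact ⟨le_refl _, hx n⟩

lemma valSet_nonempty {x : Linf} (hx : ∀ n, 0 ≤ x n) : (valSet φ ψ x).Nonempty :=
  ⟨_, ⟨0, zero_mem_Wit hx, rfl⟩⟩

lemma valSet_nonneg (hφ : Pos φ) (hψ : Pos ψ) {x : Linf} :
    ∀ r ∈ valSet φ ψ x, (0:ℝ) ≤ r := by
  rintro r ⟨y, hy, rfl⟩
  show (0:ℝ) ≤ φ y + ψ (x - y)
  have h1 := hφ y (fun n => (hy n).1)
  have h2 := hψ (x - y) (sub_mem_nonneg hy)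
  linarith

lemma valSet_bddBelow (hφ : Pos φ) (hψ : Pos ψ) (x : Linf) : BddBelow (valSet φ ψ x) :=
  ⟨0, fun r hr => valSet_nonneg hφ hψ r hr⟩

lemma mval_nonneg (hφ : Pos φ) (hψ : Pos ψ) {x : Linf} (hx : ∀ n, 0 ≤ x n) :
    0 ≤ mval φ ψ x :=
  le_csInf (valSet_nonempty hx) (valSet_nonneg hφ hψ)

lemma mval_le (hφ : Pos φ) (hψ : Pos ψ) {x y : Linf} (hy : y ∈ Wit x) :
    mval φ ψ x ≤ φ y + ψ (x - y) :=
  csInf_le (valSet_bddBelow hφ hψ x) ⟨y, hy, rfl⟩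

lemma self_mem_Wit {x : Linf} (hx : ∀ n, 0 ≤ x n) : x ∈ Wit x := fun n => ⟨hx n, le_refl _⟩

lemma mval_le_phi (hφ : Pos φ) (hψ : Pos ψ) {x : Linf} (hx : ∀ n, 0 ≤ x n) :
    mval φ ψ x ≤ φ x := by
  have := mval_le hφ hψ (self_mem_Wit hx)
  simpa using this

lemma mval_le_psi (hφ : Pos φ) (hψ : Pos ψ) {x : Linf} (hx : ∀ n, 0 ≤ x n) :
    mval φ ψ x ≤ ψ x := by
  have := mval_le hφ hψ (zero_mem_Wit hx)
  simpa using this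

lemma mval_add (hφ : Pos φ) (hψ : Pos ψ) {x x' : Linf}
    (hx : ∀ n, 0 ≤ x n) (hx' : ∀ n, 0 ≤ x' n) :
    mval φ ψ (x + x') = mval φ ψ x + mval φ ψ x' := by
  have hxx' : ∀ n, 0 ≤ (x + x') n := by
    intro n
    have : (x + x') n = x n + x' n := by rw [lp.coeFn_add]; rfl
    rw [this]; exact add_nonneg (hx n) (hx' n)
  apply le_antisymm
  · -- subadditivity via epsilon
    apply le_of_forall_pos_le_add
    intro ε hε
    obtain ⟨r, ⟨y, hy, rfl⟩, hr⟩ := (Real.lt_sInf_add_pos (valSet_nonempty hx) (half_pos hε))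
    obtain ⟨r', ⟨y', hy', rfl⟩, hr'⟩ := (Real.lt_sInf_add_pos (valSet_nonempty hx') (half_pos hε))
    have hmem : y + y' ∈ Wit (x + x') := by
      intro n
      have h1 : (y + y') n = y n + y' n := by rw [lp.coeFn_add]; rfl
      have h2 : (x + x') n = x n + x' n := by rw [lp.coeFn_add]; rfl
      rw [h1, h2]
      exact ⟨by linarith [(hy n).1, (hy' n).1], by linarith [(hy n).2, (hy' n).2]⟩
    have key := mval_le hφ hψ hmem
    have heq : (x + x') - (y + y') = (x - y) + (x' - y') := by ring
    rw [heq, map_add, map_add] at key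
    simp only at hr hr'
    calc mval φ ψ (x + x') ≤ (φ y + ψ (x - y)) + (φ y' + ψ (x' - y')) := by linarith
    _ ≤ mval φ ψ x + mval φ ψ x' + ε := by
        unfold mval; linarith
  · -- superadditivity
    apply le_csInf (valSet_nonempty hxx')
    rintro r ⟨y, hy, rfl⟩
    show mval φ ψ x + mval φ ψ x' ≤ φ y + ψ (x + x' - y)
    set y₁ : Linf := mkL (fun n => min (y n) (x n)) ‖y‖ (by
      intro n
      show |min (y n) (x n)| ≤ ‖y‖
      have h1 := Linf.abs_apply_le y n
      rcases le_total (y n) (x n) with h | h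
      · rwa [min_eq_left h]
      · rw [min_eq_right h, abs_of_nonneg (hx n)]
        calc x n ≤ y n := h
        _ ≤ |y n| := le_abs_self _
        _ ≤ ‖y‖ := h1) with hy₁def
    have hy₁app : ∀ n, y₁ n = min (y n) (x n) := fun n => rfl
    have hmem1 : y₁ ∈ Wit x := by
      intro n
      rw [hy₁app]
      exact ⟨le_min (hy n).1 (hx n), min_le_right _ _⟩
    have hmem2 : y - y₁ ∈ Wit x' := by
      intro n
      have h1 : (y - y₁) n = y n - y₁ n := by rw [lp.coeFn_sub]; rfl
      have h2 : (x + x') n = x n + x' n := by rw [lp.coeFn_add]; rfl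
      rw [h1, hy₁app]
      rcases le_total (y n) (x n) with h | h
      · rw [min_eq_left h]; exact ⟨by linarith, by linarith [hx' n]⟩
      · rw [min_eq_right h]
        have := (hy n).2
        rw [h2] at this
        exact ⟨by linarith, by linarith⟩
    have e1 := mval_le hφ hψ hmem1
    have e2 := mval_le hφ hψ hmem2
    have heq1 : x' - (y - y₁) = (x + x' - y) - (x - y₁) := by ring
    have heq2 : φ y = φ y₁ + φ (y - y₁) := by rw [← map_add]; ring_nf
    have heq3 : ψ (x - y₁) + ψ (x' - (y - y₁)) = ψ (x + x' - y) := by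
      rw [← map_add]; ring_nf
    linarith

lemma mval_zero (hφ : Pos φ) (hψ : Pos ψ) : mval φ ψ 0 = 0 := by
  apply le_antisymm
  · have := mval_le_phi hφ hψ (x := 0) (fun n => by rw [lp.coeFn_zero]; exact le_refl _)
    simpa using this
  · exact mval_nonneg hφ hψ (fun n => by rw [lp.coeFn_zero]; exact le_refl _)

set_option maxHeartbeats 2000000 in
lemma mval_smul (hφ : Pos φ) (hψ : Pos ψ) {c : ℝ} (hc : 0 ≤ c) {x : Linf}
    (hx : ∀ n, 0 ≤ x n) :
    mval φ ψ (c • x) = c * mval φ ψ x := by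
  rcases eq_or_lt_of_le hc with rfl | hc
  · simp [mval_zero hφ hψ]
  have hcx : ∀ n, 0 ≤ (c • x) n := by
    intro n
    have : (c • x) n = c * x n := by rw [lp.coeFn_smul]; rfl
    rw [this]; exact mul_nonneg hc.le (hx n)
  apply le_antisymm
  · apply le_of_forall_pos_le_add
    intro ε hε
    obtain ⟨r, ⟨y, hy, rfl⟩, hr⟩ :=
      Real.lt_sInf_add_pos (valSet_nonempty hx) (div_pos hε hc)
    have hr' : φ y + ψ (x - y) < mval φ ψ x + ε / c := hr
    have hmem : c • y ∈ Wit (c • x) := by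
      intro n
      have h1 : (c • y) n = c * y n := by rw [lp.coeFn_smul]; rfl
      have h2 : (c • x) n = c * x n := by rw [lp.coeFn_smul]; rfl
      rw [h1, h2]
      exact ⟨mul_nonneg hc.le (hy n).1, by nlinarith [(hy n).2]⟩
    have key := mval_le hφ hψ hmem
    have heq : c • x - c • y = c • (x - y) := by rw [smul_sub]
    rw [heq, map_smul, map_smul] at key
    simp only [smul_eq_mul] at key
    clear hr hmem heq hy hcx hx
    set A := φ y with hA
    set Bv := ψ (x - y) with hBv
    set M1 := mval φ ψ x with hM1
    set M2 := mval φ ψ (c • x) with hM2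
    have h5 : c * (ε / c) = ε := by field_simp
    nlinarith [key, hr', hc]
  · apply le_of_forall_pos_le_add
    intro ε hε
    obtain ⟨r, ⟨y, hy, rfl⟩, hr⟩ :=
      Real.lt_sInf_add_pos (valSet_nonempty hcx) hε
    have hr' : φ y + ψ (c • x - y) < mval φ ψ (c • x) + ε := hr
    have hmem : c⁻¹ • y ∈ Wit x := by
      intro n
      have h1 : (c⁻¹ • y) n = c⁻¹ * y n := by rw [lp.coeFn_smul]; rfl
      have h2 : (c • x) n = c * x n := by rw [lp.coeFn_smul]; rfl
      rw [h1]
      have h3 := (hy n).2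
      rw [h2] at h3
      refine ⟨mul_nonneg (inv_pos.2 hc).le (hy n).1, ?_⟩
      rw [inv_mul_le_iff₀ hc]; linarith [h3]
    have key := mval_le hφ hψ hmem
    have heq : x - c⁻¹ • y = c⁻¹ • (c • x - y) := by
      rw [smul_sub, inv_smul_smul₀ hc.ne']
    rw [heq, map_smul, map_smul] at key
    simp only [smul_eq_mul] at key
    clear hr hmem heq hy hcx hx
    set A := φ y with hA
    set Bv := ψ (c • x - y) with hBv
    set M1 := mval φ ψ x with hM1
    set M2 := mval φ ψ (c • x) with hM2
    have h6 : c * M1 ≤ A + Bv := by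
      have h7 := mul_le_mul_of_nonneg_left key hc.le
      have h8 : c * (c⁻¹ * A + c⁻¹ * Bv) = A + Bv := by field_simp
      linarith
    linarith

def nuFun (φ ψ : StrongDual ℝ Linf) (x : Linf) : ℝ :=
  mval φ ψ (posL x) - mval φ ψ (negL x)

lemma nuFun_eq (hφ : Pos φ) (hψ : Pos ψ) {x u v : Linf}
    (hu : ∀ n, 0 ≤ u n) (hv : ∀ n, 0 ≤ v n) (hx : x = u - v) :
    nuFun φ ψ x = mval φ ψ u - mval φ ψ v := by
  have key : u + negL x = v + posL x := by
    apply lp.ext; funext n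
    have h1 : (u + negL x) n = u n + negL x n := by rw [lp.coeFn_add]; rfl
    have h2 : (v + posL x) n = v n + posL x n := by rw [lp.coeFn_add]; rfl
    have h3 : x n = u n - v n := by rw [hx, lp.coeFn_sub]; rfl
    rw [h1, h2, posL_apply, negL_apply, h3]
    rcases le_total (u n - v n) 0 with h | h
    · rw [max_eq_right h, max_eq_left (by linarith)]; ring
    · rw [max_eq_left h, max_eq_right (by linarith)]; ring
  have e1 := mval_add hφ hψ hu (negL_nonneg x)
  have e2 := mval_add hφ hψ hv (posL_nonneg x)
  rw [key] at e1
  rw [e2] at e1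
  unfold nuFun
  linarith

lemma nuFun_of_nonneg (hφ : Pos φ) (hψ : Pos ψ) {x : Linf} (hx : ∀ n, 0 ≤ x n) :
    nuFun φ ψ x = mval φ ψ x := by
  have := nuFun_eq hφ hψ hx (fun n => le_refl (0:ℝ) |>.trans (by rw [lp.coeFn_zero]; exact le_refl _))
    (x := x) (by abel)
  rw [this, mval_zero hφ hψ, sub_zero]

lemma nuFun_add (hφ : Pos φ) (hψ : Pos ψ) (x y : Linf) :
    nuFun φ ψ (x + y) = nuFun φ ψ x + nuFun φ ψ y := by
  have hx : x + y = (posL x + posL y) - (negL x + negL y) := by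
    have := posL_sub_negL x
    have := posL_sub_negL y
    have h1 := posL_sub_negL x
    have h2 := posL_sub_negL y
    calc x + y = (posL x - negL x) + (posL y - negL y) := by rw [h1, h2]
    _ = (posL x + posL y) - (negL x + negL y) := by abel
  have hpos : ∀ n, 0 ≤ (posL x + posL y) n := by
    intro n
    have : (posL x + posL y) n = posL x n + posL y n := by rw [lp.coeFn_add]; rfl
    rw [this]; exact add_nonneg (posL_nonneg x n) (posL_nonneg y n)
  have hneg : ∀ n, 0 ≤ (negL x + negL y) n := by
    intro n
    have : (negL x + negL y) n = negL x n + negL y n := by rw [lp.coeFn_add]; rfl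
    rw [this]; exact add_nonneg (negL_nonneg x n) (negL_nonneg y n)
  rw [nuFun_eq hφ hψ hpos hneg hx,
    mval_add hφ hψ (posL_nonneg x) (posL_nonneg y),
    mval_add hφ hψ (negL_nonneg x) (negL_nonneg y)]
  unfold nuFun
  ring

lemma nuFun_smul (hφ : Pos φ) (hψ : Pos ψ) (c : ℝ) (x : Linf) :
    nuFun φ ψ (c • x) = c * nuFun φ ψ x := by
  rcases le_total 0 c with hc | hc
  · have hx : c • x = (c • posL x) - (c • negL x) := by
      rw [← smul_sub, posL_sub_negL]
    have hpos : ∀ n, 0 ≤ (c • posL x) n := by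
      intro n
      have : (c • posL x) n = c * posL x n := by rw [lp.coeFn_smul]; rfl
      rw [this]; exact mul_nonneg hc (posL_nonneg x n)
    have hneg : ∀ n, 0 ≤ (c • negL x) n := by
      intro n
      have : (c • negL x) n = c * negL x n := by rw [lp.coeFn_smul]; rfl
      rw [this]; exact mul_nonneg hc (negL_nonneg x n)
    rw [nuFun_eq hφ hψ hpos hneg hx,
      mval_smul hφ hψ hc (posL_nonneg x), mval_smul hφ hψ hc (negL_nonneg x)]
    unfold nuFun; ring
  · have hc' : 0 ≤ -c := by linarith
    have hx : c • x = ((-c) • negL x) - ((-c) • posL x) := by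
      rw [← smul_sub]
      have : negL x - posL x = -(posL x - negL x) := by abel
      rw [this, posL_sub_negL, smul_neg, neg_smul, neg_neg]
    have hpos : ∀ n, 0 ≤ ((-c) • negL x) n := by
      intro n
      have : ((-c) • negL x) n = -c * negL x n := by rw [lp.coeFn_smul]; rfl
      rw [this]; exact mul_nonneg hc' (negL_nonneg x n)
    have hneg : ∀ n, 0 ≤ ((-c) • posL x) n := by
      intro n
      have : ((-c) • posL x) n = -c * posL x n := by rw [lp.coeFn_smul]; rfl
      rw [this]; exact mul_nonneg hc' (posL_nonneg x n)
    rw [nuFun_eq hφ hψ hpos hneg hx,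
      mval_smul hφ hψ hc' (negL_nonneg x), mval_smul hφ hψ hc' (posL_nonneg x)]
    unfold nuFun; ring

lemma posL_norm_le (x : Linf) : ‖posL x‖ ≤ ‖x‖ := by
  apply Linf.norm_le (norm_nonneg x)
  intro n
  rw [posL_apply]
  have h1 := Linf.abs_apply_le x n
  rcases le_total (x n) 0 with h | h
  · rw [max_eq_right h, abs_zero]; exact norm_nonneg x
  · rw [max_eq_left h, abs_of_nonneg h]; exact (le_abs_self _).trans h1

lemma negL_norm_le (x : Linf) : ‖negL x‖ ≤ ‖x‖ := by
  apply Linf.norm_le (norm_nonneg x)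
  intro n
  rw [negL_apply]
  have h1 := Linf.abs_apply_le x n
  rcases le_total (x n) 0 with h | h
  · rw [max_eq_left (by linarith), abs_of_nonneg (by linarith)]
    calc -x n ≤ |x n| := neg_le_abs _
    _ ≤ ‖x‖ := h1
  · rw [max_eq_right (by linarith), abs_zero]; exact norm_nonneg x

def nuLin (φ ψ : StrongDual ℝ Linf) (hφ : Pos φ) (hψ : Pos ψ) : Linf →ₗ[ℝ] ℝ where
  toFun := nuFun φ ψ
  map_add' := nuFun_add hφ hψ
  map_smul' := by intro c x; simpa using nuFun_smul hφ hψ c x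

def nuClm (φ ψ : StrongDual ℝ Linf) (hφ : Pos φ) (hψ : Pos ψ) :
    StrongDual ℝ Linf :=
  LinearMap.mkContinuous (nuLin φ ψ hφ hψ) ‖φ‖ (by
    intro x
    have h1 : mval φ ψ (posL x) ≤ φ (posL x) := mval_le_phi hφ hψ (posL_nonneg x)
    have h2 : mval φ ψ (negL x) ≤ φ (negL x) := mval_le_phi hφ hψ (negL_nonneg x)
    have h3 : 0 ≤ mval φ ψ (posL x) := mval_nonneg hφ hψ (posL_nonneg x)
    have h4 : 0 ≤ mval φ ψ (negL x) := mval_nonneg hφ hψ (negL_nonneg x)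
    have h5 : φ (posL x) ≤ ‖φ‖ * ‖x‖ := by
      calc φ (posL x) ≤ ‖φ‖ * ‖posL x‖ := le_trans (le_abs_self _) (φ.le_opNorm _)
      _ ≤ ‖φ‖ * ‖x‖ := by
          exact mul_le_mul_of_nonneg_left (posL_norm_le x) (norm_nonneg φ)
    have h6 : φ (negL x) ≤ ‖φ‖ * ‖x‖ := by
      calc φ (negL x) ≤ ‖φ‖ * ‖negL x‖ := le_trans (le_abs_self _) (φ.le_opNorm _)
      _ ≤ ‖φ‖ * ‖x‖ := by
          exact mul_le_mul_of_nonneg_left (negL_norm_le x) (norm_nonneg φ)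
    have : |nuFun φ ψ x| ≤ ‖φ‖ * ‖x‖ := by
      rw [abs_le]
      constructor
      · unfold nuFun; linarith
      · unfold nuFun; linarith
    show ‖nuFun φ ψ x‖ ≤ ‖φ‖ * ‖x‖
    rw [Real.norm_eq_abs]
    exact this)

lemma nuClm_apply (hφ : Pos φ) (hψ : Pos ψ) (x : Linf) :
    nuClm φ ψ hφ hψ x = nuFun φ ψ x := rfl

lemma nuClm_pos (hφ : Pos φ) (hψ : Pos ψ) : Pos (nuClm φ ψ hφ hψ) := by
  intro x hx
  rw [nuClm_apply, nuFun_of_nonneg hφ hψ hx]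
  exact mval_nonneg hφ hψ hx

-- invariance
def ShInv (φ : StrongDual ℝ Linf) : Prop := ∀ x : Linf, φ (shiftSeq x) = φ x

lemma shift_onesSeq : shiftSeq onesSeq = onesSeq := by
  apply lp.ext; funext n; rfl

lemma shift_smul (c : ℝ) (x : Linf) : shiftSeq (c • x) = c • shiftSeq x := by
  apply lp.ext; funext n
  have h1 : (c • x) (n+1) = c * x (n+1) := by rw [lp.coeFn_smul]; rfl
  have h2 : (c • shiftSeq x) n = c * (shiftSeq x) n := by rw [lp.coeFn_smul]; rfl
  show shiftSeq (c • x) n = (c • shiftSeq x) n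
  rw [shiftSeq_apply, h1, h2, shiftSeq_apply]

lemma mval_shift_le (hφ : Pos φ) (hψ : Pos ψ) (hφi : ShInv φ) (hψi : ShInv ψ) {x : Linf}
    (hx : ∀ n, 0 ≤ x n) :
    mval φ ψ (shiftSeq x) ≤ mval φ ψ x := by
  apply le_csInf (valSet_nonempty hx)
  rintro r ⟨y, hy, rfl⟩
  show mval φ ψ (shiftSeq x) ≤ φ y + ψ (x - y)
  have hmem : shiftSeq y ∈ Wit (shiftSeq x) := by
    intro n
    rw [shiftSeq_apply, shiftSeq_apply]
    exact hy (n+1)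
  have key := mval_le hφ hψ hmem
  rw [← shift_sub, hφi, hψi] at key
  exact key

lemma nuFun_sub (hφ : Pos φ) (hψ : Pos ψ) (a b : Linf) :
    nuFun φ ψ (a - b) = nuFun φ ψ a - nuFun φ ψ b := by
  have h := nuFun_add hφ hψ (a - b) b
  rw [sub_add_cancel] at h
  linarith

lemma nuFun_shift (hφ : Pos φ) (hψ : Pos ψ) (hφi : ShInv φ) (hψi : ShInv ψ) (x : Linf) :
    nuFun φ ψ (shiftSeq x) = nuFun φ ψ x := by
  have main : ∀ z : Linf, (∀ n, 0 ≤ z n) → nuFun φ ψ (shiftSeq z) = nuFun φ ψ z := by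
    intro z hz
    have hsz : ∀ n, 0 ≤ (shiftSeq z) n := fun n => hz (n+1)
    have le1 : nuFun φ ψ (shiftSeq z) ≤ nuFun φ ψ z := by
      rw [nuFun_of_nonneg hφ hψ hz, nuFun_of_nonneg hφ hψ hsz]
      exact mval_shift_le hφ hψ hφi hψi hz
    have le2 : nuFun φ ψ z ≤ nuFun φ ψ (shiftSeq z) := by
      set M := ‖z‖ with hM
      have hzM : ∀ n, z n ≤ M := by
        intro n
        calc z n ≤ |z n| := le_abs_self _
        _ ≤ M := Linf.abs_apply_le z n
      have hw : ∀ n, 0 ≤ (M • onesSeq - z) n := by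
        intro n
        have h1 : (M • onesSeq - z) n = M * 1 - z n := by
          rw [lp.coeFn_sub]
          show (M • onesSeq) n - z n = M * 1 - z n
          rw [lp.coeFn_smul]
          show M * onesSeq n - z n = M * 1 - z n
          rw [onesSeq_apply]
        rw [h1]; linarith [hzM n]
      have hshift : shiftSeq (M • onesSeq - z) = M • onesSeq - shiftSeq z := by
        rw [shift_sub, shift_smul, shift_onesSeq]
      have hw' : ∀ n, 0 ≤ (M • onesSeq - shiftSeq z) n := by
        intro n
        have h1 : (M • onesSeq - shiftSeq z) n = (shiftSeq (M • onesSeq - z)) n := by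
          rw [hshift]
        rw [h1, shiftSeq_apply]
        exact hw (n+1)
      have key := mval_shift_le hφ hψ hφi hψi hw
      rw [hshift] at key
      rw [← nuFun_of_nonneg hφ hψ hw, ← nuFun_of_nonneg hφ hψ hw'] at key
      rw [nuFun_sub hφ hψ, nuFun_sub hφ hψ] at key
      linarith
    linarith
  have hd : x = posL x - negL x := (posL_sub_negL x).symm
  have hs : shiftSeq x = shiftSeq (posL x) - shiftSeq (negL x) := by
    rw [← shift_sub, posL_sub_negL]
  have hps : ∀ n, 0 ≤ (shiftSeq (posL x)) n := fun n => posL_nonneg x (n+1)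
  have hns : ∀ n, 0 ≤ (shiftSeq (negL x)) n := fun n => negL_nonneg x (n+1)
  rw [nuFun_eq hφ hψ hps hns hs, nuFun_eq hφ hψ (posL_nonneg x) (negL_nonneg x) hd,
    ← nuFun_of_nonneg hφ hψ (posL_nonneg x), ← nuFun_of_nonneg hφ hψ (negL_nonneg x),
    ← nuFun_of_nonneg hφ hψ hps, ← nuFun_of_nonneg hφ hψ hns,
    main _ (posL_nonneg x), main _ (negL_nonneg x)]

lemma pos_abs_le {L : StrongDual ℝ Linf} (hL : Pos L) (x : Linf) :
    |L x| ≤ ‖x‖ * L onesSeq := by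
  have happ : ∀ (c : ℝ) (z : Linf) (n : ℕ), (c • onesSeq - z) n = c - z n := by
    intro c z n
    rw [lp.coeFn_sub]
    show (c • onesSeq) n - z n = c - z n
    rw [lp.coeFn_smul]
    show c * onesSeq n - z n = c - z n
    rw [onesSeq_apply]; ring
  have h1 : 0 ≤ L (‖x‖ • onesSeq - x) := by
    apply hL
    intro n
    rw [happ]
    have := Linf.abs_apply_le x n
    have := le_abs_self (x n)
    linarith
  have h2 : 0 ≤ L (‖x‖ • onesSeq + x) := by
    have : ‖x‖ • onesSeq + x = ‖x‖ • onesSeq - (-x) := by abel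
    rw [this]
    apply hL
    intro n
    rw [happ]
    have := Linf.abs_apply_le x n
    have := neg_abs_le (x n)
    have hn : (-x) n = -(x n) := by rw [lp.coeFn_neg]; rfl
    rw [hn]
    linarith
  rw [map_sub, map_smul] at h1
  rw [map_add, map_smul] at h2
  simp only [smul_eq_mul] at h1 h2
  rw [abs_le]
  constructor <;> linarith

lemma pos_eq_zero {L : StrongDual ℝ Linf} (hL : Pos L) (h1 : L onesSeq = 0) (x : Linf) :
    L x = 0 := by
  have := pos_abs_le hL x
  rw [h1, mul_zero] at this
  exact abs_eq_zero.mp (le_antisymm this (abs_nonneg _))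

lemma banachLimit_norm_le_one {L : StrongDual ℝ Linf} (h : IsBanachLimit L) : ‖L‖ ≤ 1 := by
  apply ContinuousLinearMap.opNorm_le_bound _ zero_le_one
  intro x
  have := pos_abs_le h.1 x
  rw [h.2.2, mul_one] at this
  rw [Real.norm_eq_abs, one_mul]
  exact this

set_option maxHeartbeats 1000000 in
/-- Key disjointness lemma. -/
lemma exists_disjoint_witness {φ ψ : StrongDual ℝ Linf}
    (hφe : φ ∈ Set.extremePoints ℝ {L : StrongDual ℝ Linf | IsBanachLimit L})
    (hψe : ψ ∈ Set.extremePoints ℝ {L : StrongDual ℝ Linf | IsBanachLimit L})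
    (hne : φ ≠ ψ) {δ : ℝ} (hδ : 0 < δ) :
    ∃ y : Linf, (∀ n, 0 ≤ y n ∧ y n ≤ 1) ∧ φ y < δ ∧ ψ (onesSeq - y) < δ := by
  have hφB : IsBanachLimit φ := hφe.1
  have hψB : IsBanachLimit ψ := hψe.1
  have hφ : Pos φ := hφB.1
  have hψ : Pos ψ := hψB.1
  have hone : ∀ n, (0:ℝ) ≤ onesSeq n := fun n => by rw [onesSeq_apply]; norm_num
  set c := mval φ ψ onesSeq with hc
  have hc0 : 0 ≤ c := mval_nonneg hφ hψ hone
  have hc1 : c ≤ 1 := by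
    have := mval_le_phi hφ hψ hone
    rwa [hφB.2.2] at this
  rcases eq_or_lt_of_le hc0 with hc0' | hcpos
  · -- c = 0 : extract witness
    have hlt : mval φ ψ onesSeq < δ := by rw [← hc, ← hc0']; exact hδ
    rw [mval] at hlt
    obtain ⟨r, ⟨y, hy, rfl⟩, hr⟩ := (csInf_lt_iff (valSet_bddBelow hφ hψ onesSeq)
      (valSet_nonempty hone)).mp hlt
    have hr' : φ y + ψ (onesSeq - y) < δ := hr
    have h1 : 0 ≤ φ y := hφ y (fun n => (hy n).1)
    have h2 : 0 ≤ ψ (onesSeq - y) := hψ _ (sub_mem_nonneg hy)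
    exact ⟨y, fun n => ⟨(hy n).1, by have := (hy n).2; rwa [onesSeq_apply] at this⟩,
      by linarith, by linarith⟩
  · -- c > 0 : contradiction with extremality
    exfalso
    set ν := nuClm φ ψ hφ hψ with hν
    have hνpos : Pos ν := nuClm_pos hφ hψ
    have hνinv : ShInv ν := fun x => nuFun_shift hφ hψ hφB.2.1 hψB.2.1 x
    have hν1 : ν onesSeq = c := by
      rw [nuClm_apply, nuFun_of_nonneg hφ hψ hone]
    have hφν : ∀ x : Linf, (∀ n, 0 ≤ x n) → ν x ≤ φ x := by
      intro x hx
      rw [nuClm_apply, nuFun_of_nonneg hφ hψ hx]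
      exact mval_le_phi hφ hψ hx
    have hψν : ∀ x : Linf, (∀ n, 0 ≤ x n) → ν x ≤ ψ x := by
      intro x hx
      rw [nuClm_apply, nuFun_of_nonneg hφ hψ hx]
      exact mval_le_psi hφ hψ hx
    rcases eq_or_lt_of_le hc1 with hc1' | hclt
    · -- c = 1 : φ = ν = ψ
      have key : ∀ (L : StrongDual ℝ Linf), IsBanachLimit L →
          (∀ x : Linf, (∀ n, 0 ≤ x n) → ν x ≤ L x) → L = ν := by
        intro L hLB hLν
        have hpos : Pos (L - ν) := by
          intro x hx
          rw [ContinuousLinearMap.sub_apply]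
          linarith [hLν x hx]
        have hz : (L - ν) onesSeq = 0 := by
          rw [ContinuousLinearMap.sub_apply, hLB.2.2, hν1, hc1']
          ring
        ext x
        have := pos_eq_zero hpos hz x
        rw [ContinuousLinearMap.sub_apply] at this
        linarith
      have h1 := key φ hφB hφν
      have h2 := key ψ hψB hψν
      exact hne (h1.trans h2.symm)
    · -- 0 < c < 1
      set L1 : StrongDual ℝ Linf := c⁻¹ • ν with hL1
      have hL1app : ∀ x, L1 x = c⁻¹ * ν x := by
        intro x
        rw [hL1, ContinuousLinearMap.smul_apply, smul_eq_mul]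
      have hL1B : IsBanachLimit L1 := by
        refine ⟨?_, ?_, ?_⟩
        · intro x hx
          rw [hL1app]
          exact mul_nonneg (inv_pos.2 hcpos).le (hνpos x hx)
        · intro x
          rw [hL1app, hL1app, hνinv]
        · rw [hL1app, hν1, inv_mul_cancel₀ hcpos.ne']
      have key2 : ∀ (L : StrongDual ℝ Linf),
          L ∈ Set.extremePoints ℝ {L : StrongDual ℝ Linf | IsBanachLimit L} →
          (∀ x : Linf, (∀ n, 0 ≤ x n) → ν x ≤ L x) → L1 = L := by
        intro L hLe hLν
        have hLB : IsBanachLimit L := hLe.1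
        set L2 : StrongDual ℝ Linf := (1 - c)⁻¹ • (L - ν) with hL2
        have hL2app : ∀ x, L2 x = (1-c)⁻¹ * (L x - ν x) := by
          intro x
          rw [hL2, ContinuousLinearMap.smul_apply, ContinuousLinearMap.sub_apply, smul_eq_mul]
        have h1c : 0 < 1 - c := by linarith
        have hL2B : IsBanachLimit L2 := by
          refine ⟨?_, ?_, ?_⟩
          · intro x hx
            rw [hL2app]
            have := hLν x hx
            have : 0 ≤ L x - ν x := by linarith
            exact mul_nonneg (inv_pos.2 h1c).le this
          · intro x
            rw [hL2app, hL2app, hLB.2.1, hνinv]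
          · rw [hL2app, hLB.2.2, hν1]
            exact inv_mul_cancel₀ h1c.ne'
        have harith : ∀ A Bx : ℝ, c * (c⁻¹ * A) + (1-c) * ((1-c)⁻¹ * (Bx - A)) = Bx := by
          intro A Bx
          field_simp; ring
        have hseg : L ∈ openSegment ℝ L1 L2 := by
          refine ⟨c, 1 - c, hcpos, h1c, by ring, ?_⟩
          ext x
          simp only [ContinuousLinearMap.add_apply, ContinuousLinearMap.smul_apply,
            ContinuousLinearMap.sub_apply, smul_eq_mul]
          exact harith (ν x) (L x)
        exact hLe.2 hL1B hL2B hseg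
      have h1 := key2 φ hφe hφν
      have h2 := key2 ψ hψe hψν
      exact hne (h1.symm.trans h2)

lemma Linf.sub_apply (a b : Linf) (t : ℕ) : (a - b) t = a t - b t := by
  rw [lp.coeFn_sub]; rfl

lemma Linf.add_apply (a b : Linf) (t : ℕ) : (a + b) t = a t + b t := by
  rw [lp.coeFn_add]; rfl

lemma Linf.smul_apply (c : ℝ) (a : Linf) (t : ℕ) : (c • a) t = c * a t := by
  rw [lp.coeFn_smul]; rfl

lemma Linf.sum_apply {ι : Type*} (s : Finset ι) (f : ι → Linf) (t : ℕ) :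
    (∑ j ∈ s, f j) t = ∑ j ∈ s, f j t := by
  rw [lp.coeFn_sum]
  exact Finset.sum_apply t s fun j => ⇑(f j)

lemma Linf.zero_apply (t : ℕ) : (0 : Linf) t = 0 := by
  rw [lp.coeFn_zero]; rfl

set_option maxHeartbeats 4000000 in
/-- (Semenov–Sukochev) Every sequence of pairwise distinct extreme points of the set of
Banach limits is 1-equivalent to the unit vector basis of ℓ₁. -/
theorem extreme_banachLimits_one_equivalent_l1_basis
    (B : ℕ → StrongDual ℝ Linf)
    (hB : ∀ k, B k ∈ Set.extremePoints ℝ {L : StrongDual ℝ Linf | IsBanachLimit L})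
    (hinj : Function.Injective B) :
    ∀ (n : ℕ) (a : ℕ → ℝ),
      ‖∑ k ∈ Finset.range n, a k • B k‖ = ∑ k ∈ Finset.range n, |a k| := by
  classical
  intro n a
  set F := ∑ k ∈ Finset.range n, a k • B k with hF
  have hBL : ∀ k, IsBanachLimit (B k) := fun k => (hB k).1
  have hpos : ∀ k, Pos (B k) := fun k => (hBL k).1
  have upper : ‖F‖ ≤ ∑ k ∈ Finset.range n, |a k| := by
    calc ‖F‖ ≤ ∑ k ∈ Finset.range n, ‖a k • B k‖ := norm_sum_le _ _
    _ ≤ ∑ k ∈ Finset.range n, |a k| := by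
        apply Finset.sum_le_sum
        intro k _
        rw [norm_smul, Real.norm_eq_abs]
        calc |a k| * ‖B k‖ ≤ |a k| * 1 :=
          mul_le_mul_of_nonneg_left (banachLimit_norm_le_one (hBL k)) (abs_nonneg _)
        _ = |a k| := mul_one _
  have lower : ∑ k ∈ Finset.range n, |a k| ≤ ‖F‖ := by
    apply le_of_forall_pos_le_add
    intro ε hε
    set S := ∑ k ∈ Finset.range n, |a k| with hS
    have hS0 : 0 ≤ S := Finset.sum_nonneg (fun k _ => abs_nonneg _)
    set δ := ε / (3 * ((n:ℝ)+1) * (S + 1)) with hδdef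
    have hδ : 0 < δ := by rw [hδdef]; positivity
    have hY : ∀ k j : ℕ, k ≠ j → ∃ y : Linf,
        (∀ t, 0 ≤ y t ∧ y t ≤ 1) ∧ B k y < δ ∧ B j (onesSeq - y) < δ := by
      intro k j hkj
      exact exists_disjoint_witness (hB k) (hB j) (fun h => hkj (hinj h)) hδ
    choose Y hY1 hY2 hY3 using hY
    set y' : ℕ → ℕ → Linf := fun k j => if h : k = j then 0 else Y k j h with hy'def
    have hy'01 : ∀ k j t, 0 ≤ y' k j t ∧ y' k j t ≤ 1 := by
      intro k j t
      simp only [hy'def]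
      by_cases h : k = j
      · rw [dif_pos h, Linf.zero_apply]; norm_num
      · rw [dif_neg h]; exact hY1 k j h t
    have hy'k : ∀ k j, B k (y' k j) ≤ δ := by
      intro k j
      simp only [hy'def]
      by_cases h : k = j
      · rw [dif_pos h, map_zero]; exact hδ.le
      · rw [dif_neg h]; exact (hY2 k j h).le
    have hy'j : ∀ k j, k ≠ j → B j (onesSeq - y' k j) ≤ δ := by
      intro k j h
      simp only [hy'def]
      rw [dif_neg h]
      exact (hY3 k j h).le
    -- the "u" functions
    set sK : ℕ → Linf := fun k => ∑ j ∈ Finset.range n, y' k j with hsKdef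
    have hsK_apply : ∀ k t, sK k t = ∑ j ∈ Finset.range n, y' k j t := by
      intro k t
      rw [hsKdef]
      exact Linf.sum_apply _ _ t
    have hsK0 : ∀ k t, 0 ≤ sK k t := by
      intro k t
      rw [hsK_apply]
      exact Finset.sum_nonneg fun j _ => (hy'01 k j t).1
    set u : ℕ → Linf := fun k => posL (onesSeq - sK k) with hudef
    have hu_apply : ∀ k t, u k t = max (1 - sK k t) 0 := by
      intro k t
      rw [hudef]
      show posL (onesSeq - sK k) t = _
      rw [posL_apply, Linf.sub_apply, onesSeq_apply]
    have hu0 : ∀ k t, 0 ≤ u k t := by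
      intro k t; rw [hu_apply]; exact le_max_right _ _
    have hu1 : ∀ k t, u k t ≤ 1 := by
      intro k t
      rw [hu_apply]
      apply max_le _ zero_le_one
      linarith [hsK0 k t]
    have hu_le : ∀ k j, j ∈ Finset.range n → ∀ t, u k t ≤ (onesSeq - y' k j) t := by
      intro k j hj t
      rw [hu_apply, Linf.sub_apply, onesSeq_apply]
      apply max_le
      · have : y' k j t ≤ sK k t := by
          rw [hsK_apply]
          exact Finset.single_le_sum (fun i _ => (hy'01 k i t).1) hj
        linarith
      · linarith [(hy'01 k j t).2]
    have huBk : ∀ k, 1 - (n:ℝ) * δ ≤ B k (u k) := by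
      intro k
      have step1 : B k (onesSeq - sK k) ≤ B k (u k) := by
        apply (hpos k).mono
        intro t
        rw [hu_apply, Linf.sub_apply, onesSeq_apply]
        exact le_max_left _ _
      have step2 : B k (onesSeq - sK k) = 1 - ∑ j ∈ Finset.range n, B k (y' k j) := by
        rw [map_sub, (hBL k).2.2, hsKdef]
        simp only
        rw [map_sum]
      have step3 : ∑ j ∈ Finset.range n, B k (y' k j) ≤ (n:ℝ) * δ := by
        calc ∑ j ∈ Finset.range n, B k (y' k j) ≤ ∑ _j ∈ Finset.range n, δ :=
          Finset.sum_le_sum fun j _ => hy'k k j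
        _ = (n:ℝ) * δ := by rw [Finset.sum_const, Finset.card_range, nsmul_eq_mul]
      linarith
    have huBj : ∀ k j, k ≠ j → j ∈ Finset.range n → B j (u k) ≤ δ := by
      intro k j hkj hj
      calc B j (u k) ≤ B j (onesSeq - y' k j) := by
            apply (hpos j).mono
            intro t
            exact hu_le k j hj t
      _ ≤ δ := hy'j k j hkj
    -- the "v" functions
    set SK : ℕ → Linf := fun k => ∑ j ∈ (Finset.range n).erase k, u j with hSKdef
    have hSK_apply : ∀ k t, SK k t = ∑ j ∈ (Finset.range n).erase k, u j t := by
      intro k t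
      rw [hSKdef]
      exact Linf.sum_apply _ _ t
    have hSK0 : ∀ k t, 0 ≤ SK k t := by
      intro k t
      rw [hSK_apply]
      exact Finset.sum_nonneg fun j _ => hu0 j t
    set v : ℕ → Linf := fun k => posL (u k - SK k) with hvdef
    have hv_apply : ∀ k t, v k t = max (u k t - SK k t) 0 := by
      intro k t
      rw [hvdef]
      show posL (u k - SK k) t = _
      rw [posL_apply, Linf.sub_apply]
    have hv0 : ∀ k t, 0 ≤ v k t := by
      intro k t; rw [hv_apply]; exact le_max_right _ _
    have hv_le_u : ∀ k t, v k t ≤ u k t := by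
      intro k t
      rw [hv_apply]
      apply max_le _ (hu0 k t)
      linarith [hSK0 k t]
    have hv1 : ∀ k t, v k t ≤ 1 := fun k t => (hv_le_u k t).trans (hu1 k t)
    have hdisj : ∀ k j, k ∈ Finset.range n → j ∈ Finset.range n → k ≠ j →
        ∀ t, v k t = 0 ∨ v j t = 0 := by
      intro k j hk hj hkj t
      rcases le_or_gt (u k t - SK k t) 0 with h | h
      · left; rw [hv_apply]; exact max_eq_right h
      · right
        rw [hv_apply]
        apply max_eq_right
        have h1 : u j t ≤ SK k t := by
          rw [hSK_apply]
          exact Finset.single_le_sum (fun i _ => hu0 i t)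
            (Finset.mem_erase.mpr ⟨Ne.symm hkj, hj⟩)
        have h2 : u k t ≤ SK j t := by
          rw [hSK_apply]
          exact Finset.single_le_sum (fun i _ => hu0 i t)
            (Finset.mem_erase.mpr ⟨hkj, hk⟩)
        linarith
    -- the test vector x
    set sgn : ℕ → ℝ := fun k => if a k < 0 then (-1:ℝ) else 1 with hsgndef
    have hsgn_abs : ∀ k, |sgn k| = 1 := by
      intro k
      simp only [hsgndef]
      by_cases h : a k < 0
      · rw [if_pos h]; norm_num
      · rw [if_neg h]; norm_num
    have hsgn_mul : ∀ k, a k * sgn k = |a k| := by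
      intro k
      simp only [hsgndef]
      by_cases h : a k < 0
      · rw [if_pos h, abs_of_neg h]; ring
      · rw [if_neg h, abs_of_nonneg (not_lt.mp h)]; ring
    set x : Linf := ∑ k ∈ Finset.range n, sgn k • v k with hxdef
    have hx_apply : ∀ t, x t = ∑ k ∈ Finset.range n, sgn k * v k t := by
      intro t
      rw [hxdef, Linf.sum_apply]
      exact Finset.sum_congr rfl fun k _ => Linf.smul_apply _ _ t
    have hxnorm : ‖x‖ ≤ 1 := by
      apply Linf.norm_le zero_le_one
      intro t
      rw [hx_apply]
      by_cases hall : ∀ k ∈ Finset.range n, v k t = 0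
      · have : ∑ k ∈ Finset.range n, sgn k * v k t = 0 :=
          Finset.sum_eq_zero fun k hk => by rw [hall k hk, mul_zero]
        rw [this]; norm_num
      · push_neg at hall
        obtain ⟨k₀, hk₀, hk₀ne⟩ := hall
        have hsum : ∑ k ∈ Finset.range n, sgn k * v k t = sgn k₀ * v k₀ t := by
          apply Finset.sum_eq_single_of_mem k₀ hk₀
          intro j hj hjne
          rcases hdisj j k₀ hj hk₀ hjne t with h | h
          · rw [h, mul_zero]
          · exact absurd h hk₀ne
        rw [hsum, abs_mul, hsgn_abs, one_mul]
        rw [abs_of_nonneg (hv0 k₀ t)]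
        exact hv1 k₀ t
    -- lower bounds on B k (v k) and cross terms
    have hBvk : ∀ k ∈ Finset.range n, 1 - 2*(n:ℝ)*δ ≤ B k (v k) := by
      intro k hk
      have step1 : B k (u k - SK k) ≤ B k (v k) := by
        apply (hpos k).mono
        intro t
        rw [hv_apply, Linf.sub_apply]
        exact le_max_left _ _
      have step2 : B k (u k - SK k) =
          B k (u k) - ∑ j ∈ (Finset.range n).erase k, B k (u j) := by
        rw [map_sub, hSKdef]
        simp only
        rw [map_sum]
      have step3 : ∑ j ∈ (Finset.range n).erase k, B k (u j) ≤ (n:ℝ) * δ := by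
        calc ∑ j ∈ (Finset.range n).erase k, B k (u j)
            ≤ ∑ _j ∈ (Finset.range n).erase k, δ := by
              apply Finset.sum_le_sum
              intro j hj
              obtain ⟨hjk, hjr⟩ := Finset.mem_erase.mp hj
              exact huBj j k hjk hk
        _ = ((Finset.range n).erase k).card * δ := by
              rw [Finset.sum_const, nsmul_eq_mul]
        _ ≤ (n:ℝ) * δ := by
              apply mul_le_mul_of_nonneg_right _ hδ.le
              have : ((Finset.range n).erase k).card ≤ n := by
                calc ((Finset.range n).erase k).card ≤ (Finset.range n).card :=
                  Finset.card_le_card (Finset.erase_subset _ _)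
                _ = n := Finset.card_range n
              exact_mod_cast this
      linarith [huBk k]
    have hBvcross : ∀ k j, j ∈ Finset.range n → j ≠ k → B j (v k) ≤ δ := by
      intro k j hj hjk
      calc B j (v k) ≤ B j (u k) := (hpos j).mono fun t => hv_le_u k t
      _ ≤ δ := huBj k j (Ne.symm hjk) hj
    have hBv0 : ∀ k j, 0 ≤ B j (v k) := by
      intro k j
      exact hpos j (v k) (hv0 k)
    -- evaluate F x
    have hFx : F x = ∑ j ∈ Finset.range n, a j * (∑ k ∈ Finset.range n, sgn k * B j (v k)) := by
      rw [hF, ContinuousLinearMap.sum_apply]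
      apply Finset.sum_congr rfl
      intro j _
      rw [ContinuousLinearMap.smul_apply, smul_eq_mul]
      congr 1
      rw [hxdef, map_sum]
      apply Finset.sum_congr rfl
      intro k _
      rw [map_smul, smul_eq_mul]
    have hterm : ∀ j ∈ Finset.range n,
        |a j| - 3*(n:ℝ)*δ*|a j| ≤ a j * (∑ k ∈ Finset.range n, sgn k * B j (v k)) := by
      intro j hj
      have hsplit : ∑ k ∈ Finset.range n, sgn k * B j (v k)
          = sgn j * B j (v j) + ∑ k ∈ (Finset.range n).erase j, sgn k * B j (v k) := by
        rw [← Finset.add_sum_erase _ _ hj]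
      set T := ∑ k ∈ (Finset.range n).erase j, sgn k * B j (v k) with hT
      have hTabs : |T| ≤ (n:ℝ) * δ := by
        calc |T| ≤ ∑ k ∈ (Finset.range n).erase j, |sgn k * B j (v k)| :=
          Finset.abs_sum_le_sum_abs _ _
        _ ≤ ∑ _k ∈ (Finset.range n).erase j, δ := by
            apply Finset.sum_le_sum
            intro k hk
            obtain ⟨hkj, hkr⟩ := Finset.mem_erase.mp hk
            rw [abs_mul, hsgn_abs, one_mul, abs_of_nonneg (hBv0 k j)]
            exact hBvcross k j hj (Ne.symm hkj)
        _ = ((Finset.range n).erase j).card * δ := by rw [Finset.sum_const, nsmul_eq_mul]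
        _ ≤ (n:ℝ) * δ := by
            apply mul_le_mul_of_nonneg_right _ hδ.le
            have : ((Finset.range n).erase j).card ≤ n := by
              calc ((Finset.range n).erase j).card ≤ (Finset.range n).card :=
                Finset.card_le_card (Finset.erase_subset _ _)
              _ = n := Finset.card_range n
            exact_mod_cast this
      rw [hsplit]
      have expand : a j * (sgn j * B j (v j) + T) = |a j| * B j (v j) + a j * T := by
        rw [← hsgn_mul j]; ring
      rw [expand]
      have hterm1 : |a j| * (1 - 2*(n:ℝ)*δ) ≤ |a j| * B j (v j) :=
        mul_le_mul_of_nonneg_left (hBvk j hj) (abs_nonneg _)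
      have hterm2 : -( |a j| * ((n:ℝ)*δ)) ≤ a j * T := by
        have h1 : |a j * T| ≤ |a j| * ((n:ℝ)*δ) := by
          rw [abs_mul]
          exact mul_le_mul_of_nonneg_left hTabs (abs_nonneg _)
        linarith [neg_abs_le (a j * T)]
      nlinarith [abs_nonneg (a j), hδ.le]
    have hFxlow : S - 3*(n:ℝ)*δ*S ≤ F x := by
      rw [hFx, hS]
      have : ∑ k ∈ Finset.range n, |a k| - 3*(n:ℝ)*δ* ∑ k ∈ Finset.range n, |a k|
          = ∑ j ∈ Finset.range n, (|a j| - 3*(n:ℝ)*δ*|a j|) := by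
        rw [Finset.sum_sub_distrib, Finset.mul_sum]
      rw [this]
      exact Finset.sum_le_sum hterm
    have hFxnorm : F x ≤ ‖F‖ := by
      calc F x ≤ |F x| := le_abs_self _
      _ ≤ ‖F‖ * ‖x‖ := by
          rw [← Real.norm_eq_abs]
          exact F.le_opNorm x
      _ ≤ ‖F‖ * 1 := mul_le_mul_of_nonneg_left hxnorm (norm_nonneg F)
      _ = ‖F‖ := mul_one _
    have hδS : 3*(n:ℝ)*δ*S ≤ ε := by
      rw [hδdef]
      rw [div_eq_mul_inv]
      have hD : (0:ℝ) < 3 * ((n:ℝ)+1) * (S + 1) := by positivity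
      rw [mul_comm]
      rw [← mul_assoc]
      have key : 3*(n:ℝ)*S ≤ 3 * ((n:ℝ)+1) * (S + 1) := by
        have hn : (0:ℝ) ≤ (n:ℝ) := Nat.cast_nonneg n
        nlinarith
      calc S * (3*(n:ℝ)) * (ε * (3 * ((n:ℝ)+1) * (S + 1))⁻¹)
          = (3*(n:ℝ)*S) * ((3 * ((n:ℝ)+1) * (S + 1))⁻¹) * ε := by ring
      _ ≤ (3 * ((n:ℝ)+1) * (S + 1)) * ((3 * ((n:ℝ)+1) * (S + 1))⁻¹) * ε := by
          apply mul_le_mul_of_nonneg_right _ hε.le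
          apply mul_le_mul_of_nonneg_right key (inv_nonneg.mpr hD.le)
      _ = ε := by
          rw [mul_inv_cancel₀ hD.ne']
          ring
    linarith
  exact le_antisymm upper lower
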